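/- arXiv:0806.3012 — 2 statements merged into one kernel-verified Lean document; each statement's English description precedes it below -/
import Mathlib

section
/- For any 0 < ε < 1, the fourth moments of the autoregressive observations are uniformly bounded: for every n ≥ 1, every 0 ≤ k ≤ n, every S ∈ Γ_ε and every p ∈ 𝒫, E_{S,p} y_k⁴ ≤ 8 |y_0|⁴ + 8 σ*/ε⁴. In particular m* := sup_{n≥1} sup_{0≤k≤n} sup_{S∈Γ_ε} sup_{p∈𝒫} E_{S,p} y_k⁴ < ∞. -/
open MeasureTheory Filter Set ENNReal NNReal

noncomputable section

/-- The class `𝒫` of noise densities: probability densities on `ℝ` with mean `0`,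
variance `1` and fourth absolute moment bounded by `σstar`. -/
def IsNoiseDensity (σstar : ℝ) (p : ℝ → ℝ) : Prop :=
  (∀ x, 0 ≤ p x) ∧ Integrable p ∧ (∫ x, p x) = 1 ∧
  Integrable (fun x => x * p x) ∧ (∫ x, x * p x) = 0 ∧
  Integrable (fun x => x ^ 2 * p x) ∧ (∫ x, x ^ 2 * p x) = 1 ∧
  Integrable (fun x => |x| ^ 4 * p x) ∧ (∫ x, |x| ^ 4 * p x) ≤ σstar

/-- Law of a single noise variable with density `p`. -/
def noiseMeasure (p : ℝ → ℝ) : Measure ℝ := volume.withDensity fun x => ENNReal.ofReal (p x)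

/-- Joint law of the noise vector `(ξ₁, …, ξ_n)` (i.i.d. with density `p`). -/
def noisePi (n : ℕ) (p : ℝ → ℝ) : Measure (Fin n → ℝ) := Measure.pi fun _ => noiseMeasure p

/-- The autoregressive trajectory: `y 0 = y0`, `y (k+1) = S ((k+1)/n) * y k + ξ (k+1)`. -/
def traj (n : ℕ) (S : ℝ → ℝ) (y0 : ℝ) (ξ : Fin n → ℝ) : ℕ → ℝ
  | 0 => y0
  | k + 1 => S (((k : ℝ) + 1) / n) * traj n S y0 ξ k + if hk : k < n then ξ ⟨k, hk⟩ else 0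

/-- The bandwidth `h = n ^ (-1/(2β+1))`. -/
def bw (β : ℝ) (n : ℕ) : ℝ := (n : ℝ) ^ (-(1 / (2 * β + 1)))

/-- The normalising rate `φ_n = n ^ (β/(2β+1))`. -/
def rate (β : ℝ) (n : ℕ) : ℝ := (n : ℝ) ^ (β / (2 * β + 1))

/-- `u_k = (x_k - z0)/h` with `x_k = k/n`. -/
def uu (β z0 : ℝ) (n k : ℕ) : ℝ := ((k : ℝ) / n - z0) / bw β n

/-- The stability set `Γ_ε`. -/
def stabSet (ε : ℝ) : Set (ℝ → ℝ) :=
  {S | ContDiff ℝ 1 S ∧ ∀ x ∈ Icc (0 : ℝ) 1, |S x| ≤ 1 - ε}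

/-- The set `Θ_{K,ε}`. -/
def thetaSet (K ε : ℝ) : Set (ℝ → ℝ) :=
  {S | S ∈ stabSet ε ∧ ∀ x ∈ Icc (0 : ℝ) 1, |deriv S x| ≤ K}

/-- The stable local Hölder class `H^β(z0, K, ε)` with `β = 1 + α`. -/
def holderClass (z0 K ε α : ℝ) : Set (ℝ → ℝ) :=
  {S | S ∈ stabSet ε ∧ (∀ x ∈ Icc (0 : ℝ) 1, |deriv S x| ≤ K) ∧
      ∀ x ∈ Icc (0 : ℝ) 1, |deriv S x - deriv S z0| ≤ K * |x - z0| ^ α}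

/-- The weak stable local Hölder class `U^β_{δ,n}(z0, ε)`. -/
def weakClass (z0 ε β δ : ℝ) (n : ℕ) : Set (ℝ → ℝ) :=
  {S | S ∈ stabSet ε ∧ (∀ x ∈ Icc (0 : ℝ) 1, |deriv S x| ≤ δ⁻¹) ∧
      |∫ u in (-1 : ℝ)..1, (S (z0 + u * bw β n) - S z0)| ≤ δ * bw β n ^ β}

/-- The observation vector `(y_1, …, y_n)`. -/
def obs (n : ℕ) (S : ℝ → ℝ) (y0 : ℝ) (ξ : Fin n → ℝ) : Fin n → ℝ :=
  fun i => traj n S y0 ξ ((i : ℕ) + 1)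

/-- The risk `R_n(S̃, S) = sup_{p ∈ 𝒫} E_{S,p} |S̃(y_1,…,y_n) - S z0|`. -/
def risk (σstar : ℝ) (n : ℕ) (y0 z0 : ℝ) (est : (Fin n → ℝ) → ℝ) (S : ℝ → ℝ) : ℝ≥0∞ :=
  ⨆ p ∈ {p : ℝ → ℝ | IsNoiseDensity σstar p},
    ∫⁻ ξ, ENNReal.ofReal |est (obs n S y0 ξ) - S z0| ∂noisePi n p

/-- The kernel estimator `Ŝ_n(z0)` built from the trajectory `y`. -/
def kernelEst (n : ℕ) (β z0 : ℝ) (Q : ℝ → ℝ) (d : ℝ) (y : ℕ → ℝ) : ℝ :=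
  if d ≤ ∑ i ∈ Finset.range n, Q (uu β z0 n (i + 1)) * y i ^ 2 then
    (∑ i ∈ Finset.range n, Q (uu β z0 n (i + 1)) * y i * y (i + 1)) /
      (∑ i ∈ Finset.range n, Q (uu β z0 n (i + 1)) * y i ^ 2)
  else 0


section Aux

lemma traj_measurable (n : ℕ) (S : ℝ → ℝ) (y0 : ℝ) (k : ℕ) :
    Measurable fun ξ : Fin n → ℝ => traj n S y0 ξ k := by
  induction k with
  | zero => exact measurable_const
  | succ k ih =>
    show Measurable fun ξ : Fin n → ℝ =>
      S (((k : ℝ) + 1) / n) * traj n S y0 ξ k + if hk : k < n then ξ ⟨k, hk⟩ else 0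
    by_cases hk : k < n
    · simp only [dif_pos hk]
      exact (measurable_const.mul ih).add (measurable_pi_apply _)
    · simp only [dif_neg hk]
      exact (measurable_const.mul ih).add measurable_const

lemma marg_lintegral {n : ℕ} (μ : Measure ℝ) [IsProbabilityMeasure μ] (i : Fin n)
    {g : ℝ → ℝ≥0∞} (hg : Measurable g) :
    ∫⁻ ξ : Fin n → ℝ, g (ξ i) ∂(Measure.pi fun _ => μ) = ∫⁻ x, g x ∂μ := by
  have hmap : (Measure.pi fun _ : Fin n => μ).map (Function.eval i) = μ := by
    ext s hs
    rw [Measure.map_apply (measurable_pi_apply i) hs, Set.eval_preimage, Measure.pi_pi]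
    rw [Finset.prod_eq_single i]
    · simp
    · intro j _ hj; simp [Function.update_of_ne hj]
    · simp
  rw [← lintegral_map hg (measurable_pi_apply i), hmap]

lemma lintegral_pow_four_eq {α : Type*} [MeasurableSpace α] (μ : Measure α) (f : α → ℝ) :
    ∫⁻ x, ENNReal.ofReal (f x ^ 4) ∂μ = eLpNorm f 4 μ ^ (4 : ℝ) := by
  rw [eLpNorm_eq_lintegral_rpow_enorm_toReal (by norm_num) (by norm_num), ← ENNReal.rpow_mul]
  have h4 : (4 : ℝ≥0∞).toReal = (4 : ℝ) := by norm_num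
  rw [h4, show (1 / (4 : ℝ)) * (4 : ℝ) = 1 by norm_num, ENNReal.rpow_one]
  refine lintegral_congr fun x => ?_
  have hnn : (0 : ℝ) ≤ f x ^ 4 := by positivity
  have habs : f x ^ 4 = |f x| ^ 4 := by rw [pow_abs, abs_of_nonneg hnn]
  rw [habs, ← Real.norm_eq_abs, ← ofReal_norm,
    ENNReal.ofReal_rpow_of_nonneg (norm_nonneg _) (by norm_num : (0:ℝ) ≤ 4)]
  congr 1
  rw [← Real.rpow_natCast ‖f x‖ 4]
  norm_num

end Aux

/-- Lemma A.1: uniform bound on the fourth moments of the autoregressive observations;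
in particular `m* < ∞`. -/
theorem statement4
    (σstar : ℝ) (hσ : 3 ≤ σstar) (y0 : ℝ) (ε : ℝ) (hε0 : 0 < ε) (hε1 : ε < 1) :
    (∀ n : ℕ, 1 ≤ n → ∀ k ≤ n, ∀ S ∈ stabSet ε, ∀ p : ℝ → ℝ, IsNoiseDensity σstar p →
        ∫⁻ ξ, ENNReal.ofReal (traj n S y0 ξ k ^ 4) ∂noisePi n p ≤
          ENNReal.ofReal (8 * |y0| ^ 4 + 8 * σstar / ε ^ 4)) ∧
      (⨆ n ∈ {n : ℕ | 1 ≤ n}, ⨆ k ∈ {k : ℕ | k ≤ n}, ⨆ S ∈ stabSet ε,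
          ⨆ p ∈ {p : ℝ → ℝ | IsNoiseDensity σstar p},
            ∫⁻ ξ, ENNReal.ofReal (traj n S y0 ξ k ^ 4) ∂noisePi n p) < ⊤ := by
  have hσ0 : (0 : ℝ) ≤ σstar := le_trans (by norm_num) hσ
  set b : ℝ := σstar ^ ((1 : ℝ) / 4) with hbdef
  have hb0 : 0 ≤ b := Real.rpow_nonneg hσ0 _
  have hb4 : b ^ (4 : ℕ) = σstar := by
    rw [hbdef, ← Real.rpow_natCast (σstar ^ ((1 : ℝ) / 4)) 4, ← Real.rpow_mul hσ0]
    norm_num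
  have main : ∀ n : ℕ, 1 ≤ n → ∀ k ≤ n, ∀ S ∈ stabSet ε, ∀ p : ℝ → ℝ, IsNoiseDensity σstar p →
      ∫⁻ ξ, ENNReal.ofReal (traj n S y0 ξ k ^ 4) ∂noisePi n p ≤
        ENNReal.ofReal (8 * |y0| ^ 4 + 8 * σstar / ε ^ 4) := by
    intro n hn k hk S hS p hp
    obtain ⟨hp0, hpInt, hpI1, _, _, _, _, hp4Int, hp4⟩ := hp
    have hprob : IsProbabilityMeasure (noiseMeasure p) := by
      constructor
      rw [noiseMeasure, withDensity_apply _ MeasurableSet.univ, Measure.restrict_univ,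
        ← ofReal_integral_eq_lintegral_ofReal hpInt (ae_of_all _ hp0), hpI1, ENNReal.ofReal_one]
    haveI := hprob
    haveI : IsProbabilityMeasure (noisePi n p) := by
      rw [noisePi]; infer_instance
    -- fourth moment of a single noise coordinate
    have hmom : ∫⁻ x, (‖x‖₊ : ℝ≥0∞) ^ (4 : ℝ) ∂(noiseMeasure p) ≤ ENNReal.ofReal σstar := by
      have hgm : Measurable fun x : ℝ => (‖x‖₊ : ℝ≥0∞) ^ (4 : ℝ) :=
        measurable_nnnorm.coe_nnreal_ennreal.pow_const _
      rw [noiseMeasure, lintegral_withDensity_eq_lintegral_mul₀'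
        hpInt.aemeasurable.ennreal_ofReal hgm.aemeasurable]
      simp only [Pi.mul_apply]
      have hpt : ∀ x : ℝ, ENNReal.ofReal (p x) * (‖x‖₊ : ℝ≥0∞) ^ (4 : ℝ)
          = ENNReal.ofReal (|x| ^ 4 * p x) := by
        intro x
        rw [ENNReal.ofReal_mul (by positivity : (0:ℝ) ≤ |x| ^ 4),
          mul_comm (ENNReal.ofReal (|x| ^ 4)) (ENNReal.ofReal (p x))]
        congr 1
        rw [← Real.norm_eq_abs, ← enorm_eq_nnnorm, ← ofReal_norm,
          ENNReal.ofReal_rpow_of_nonneg (norm_nonneg _) (by norm_num : (0:ℝ) ≤ 4)]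
        congr 1
        rw [← Real.rpow_natCast ‖x‖ 4]
        norm_num
      rw [lintegral_congr hpt, ← ofReal_integral_eq_lintegral_ofReal hp4Int
        (ae_of_all _ fun x => mul_nonneg (by positivity) (hp0 x))]
      exact ENNReal.ofReal_le_ofReal hp4
    -- eLpNorm bound on a single noise coordinate
    have hξ : ∀ i : Fin n, eLpNorm (fun ξ : Fin n → ℝ => ξ i) 4 (noisePi n p) ≤
        ENNReal.ofReal b := by
      intro i
      rw [eLpNorm_eq_lintegral_rpow_enorm_toReal (by norm_num) (by norm_num)]
      simp only [enorm_eq_nnnorm]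
      have h4 : (4 : ℝ≥0∞).toReal = (4 : ℝ) := by norm_num
      rw [h4, noisePi, marg_lintegral (noiseMeasure p) i
        (measurable_nnnorm.coe_nnreal_ennreal.pow_const _)]
      calc (∫⁻ x, (‖x‖₊ : ℝ≥0∞) ^ (4 : ℝ) ∂noiseMeasure p) ^ ((1 : ℝ) / 4)
          ≤ (ENNReal.ofReal σstar) ^ ((1 : ℝ) / 4) := by
            exact ENNReal.rpow_le_rpow hmom (by norm_num)
        _ = ENNReal.ofReal b := by
            rw [hbdef, ← ENNReal.ofReal_rpow_of_nonneg hσ0 (by norm_num)]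
    -- inductive eLpNorm bound on the trajectory
    have key : ∀ k ≤ n, eLpNorm (fun ξ : Fin n → ℝ => traj n S y0 ξ k) 4 (noisePi n p) ≤
        ENNReal.ofReal (|y0| + b / ε) := by
      intro k
      induction k with
      | zero =>
        intro _
        have : (fun ξ : Fin n → ℝ => traj n S y0 ξ 0) = fun _ => y0 := rfl
        rw [this, eLpNorm_const y0 (by norm_num) (IsProbabilityMeasure.ne_zero _)]
        simp only [measure_univ, ENNReal.one_rpow, mul_one]
        rw [← ofReal_norm, Real.norm_eq_abs]
        exact ENNReal.ofReal_le_ofReal (le_add_of_nonneg_right (div_nonneg hb0 hε0.le))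
      | succ k ih =>
        intro hk1
        have hkn : k < n := hk1
        have hIH := ih (le_of_lt hkn)
        have heq : (fun ξ : Fin n → ℝ => traj n S y0 ξ (k + 1)) =
            (fun ξ : Fin n → ℝ => S (((k : ℝ) + 1) / n) * traj n S y0 ξ k) +
              fun ξ : Fin n → ℝ => ξ ⟨k, hkn⟩ := by
          funext ξ
          show S (((k : ℝ) + 1) / n) * traj n S y0 ξ k +
              (if hk : k < n then ξ ⟨k, hk⟩ else 0) = _
          rw [dif_pos hkn]; rfl
        rw [heq]
        have hm1 : AEStronglyMeasurable
            (fun ξ : Fin n → ℝ => S (((k : ℝ) + 1) / n) * traj n S y0 ξ k) (noisePi n p) :=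
          ((traj_measurable n S y0 k).const_mul _).aestronglyMeasurable
        have hm2 : AEStronglyMeasurable (fun ξ : Fin n → ℝ => ξ ⟨k, hkn⟩) (noisePi n p) :=
          (measurable_pi_apply _).aestronglyMeasurable
        refine le_trans (eLpNorm_add_le hm1 hm2 (by norm_num)) ?_
        have hsmul : (fun ξ : Fin n → ℝ => S (((k : ℝ) + 1) / n) * traj n S y0 ξ k) =
            S (((k : ℝ) + 1) / n) • fun ξ : Fin n → ℝ => traj n S y0 ξ k := rfl
        rw [hsmul, eLpNorm_const_smul]
        have hSb : |S (((k : ℝ) + 1) / n)| ≤ 1 - ε := by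
          apply hS.2
          constructor
          · positivity
          · rw [div_le_one (by exact_mod_cast hn : (0:ℝ) < n)]
            exact_mod_cast hk1
        have h1 : (‖S (((k : ℝ) + 1) / n)‖₊ : ℝ≥0∞) ≤ ENNReal.ofReal (1 - ε) := by
          rw [← enorm_eq_nnnorm, ← ofReal_norm, Real.norm_eq_abs]
          exact ENNReal.ofReal_le_ofReal hSb
        calc (‖S (((k : ℝ) + 1) / n)‖₊ : ℝ≥0∞) *
              eLpNorm (fun ξ : Fin n → ℝ => traj n S y0 ξ k) 4 (noisePi n p) +
              eLpNorm (fun ξ : Fin n → ℝ => ξ ⟨k, hkn⟩) 4 (noisePi n p)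
            ≤ ENNReal.ofReal (1 - ε) * ENNReal.ofReal (|y0| + b / ε) + ENNReal.ofReal b :=
              add_le_add (mul_le_mul' h1 hIH) (hξ _)
          _ ≤ ENNReal.ofReal (|y0| + b / ε) := by
              rw [← ENNReal.ofReal_mul (by linarith), ← ENNReal.ofReal_add
                (mul_nonneg (by linarith) (by positivity)) hb0]
              apply ENNReal.ofReal_le_ofReal
              have hba : (1 - ε) * (b / ε) + b = b / ε := by
                field_simp
                ring
              nlinarith [abs_nonneg y0, div_nonneg hb0 (le_of_lt hε0)]
    -- conclude
    have hkey := key k hk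
    rw [lintegral_pow_four_eq]
    calc eLpNorm (fun ξ : Fin n → ℝ => traj n S y0 ξ k) 4 (noisePi n p) ^ (4 : ℝ)
        ≤ ENNReal.ofReal (|y0| + b / ε) ^ (4 : ℝ) := by
          exact ENNReal.rpow_le_rpow hkey (by norm_num)
      _ = ENNReal.ofReal ((|y0| + b / ε) ^ (4 : ℕ)) := by
          rw [ENNReal.ofReal_rpow_of_nonneg (by positivity) (by norm_num : (0:ℝ) ≤ 4)]
          congr 1
          rw [← Real.rpow_natCast (|y0| + b / ε) 4]
          norm_num
      _ ≤ ENNReal.ofReal (8 * |y0| ^ 4 + 8 * σstar / ε ^ 4) := by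
          apply ENNReal.ofReal_le_ofReal
          have hd : (b / ε) ^ (4 : ℕ) = σstar / ε ^ 4 := by
            rw [div_pow, hb4]
          have h8 : (|y0| + b / ε) ^ (4 : ℕ) ≤ 8 * |y0| ^ 4 + 8 * (b / ε) ^ 4 := by
            nlinarith [abs_nonneg y0, div_nonneg hb0 (le_of_lt hε0),
              sq_nonneg (|y0| - b / ε), sq_nonneg (|y0| + b / ε),
              sq_nonneg (|y0| ^ 2 - (b / ε) ^ 2)]
          calc (|y0| + b / ε) ^ (4 : ℕ) ≤ 8 * |y0| ^ 4 + 8 * (b / ε) ^ 4 := h8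
            _ = 8 * |y0| ^ 4 + 8 * σstar / ε ^ 4 := by rw [hd]; ring
  refine ⟨main, ?_⟩
  refine lt_of_le_of_lt (iSup₂_le fun n hn => iSup₂_le fun k hk => iSup₂_le fun S hS =>
    iSup₂_le fun p hp => main n hn k hk S hS p hp) ENNReal.ofReal_lt_top

end
end

section
/- Let 0 < ε < 1, let s_1,…,s_n and ξ_1,…,ξ_n be real numbers with |s_k| ≤ 1 − ε for all k, let y_0 ∈ ℝ, and define y_k = s_k y_{k−1} + ξ_k for 1 ≤ k ≤ n. Then for every 1 ≤ k ≤ n, y_k⁴ ≤ 8 y_0⁴ + (8/ε³) Σ_{j=1}^k (1−ε)^{k−j} ξ_j⁴. -/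
open MeasureTheory Filter Set ENNReal NNReal

noncomputable section

lemma key_step (ε s a b : ℝ) (hε0 : 0 < ε) (hε1 : ε < 1) (hs : |s| ≤ 1 - ε) :
    (s * a + b) ^ 4 ≤ (1 - ε) * a ^ 4 + ε⁻¹ ^ 3 * b ^ 4 := by
  have hεpos : (0:ℝ) < 1 - ε := by linarith
  have hconv := (Even.convexOn_pow (n := 4) (by decide)).2 (mem_univ (s * a / (1 - ε)))
    (mem_univ (b / ε)) hεpos.le hε0.le (by ring)
  have heq : (1 - ε) • (s * a / (1 - ε)) + ε • (b / ε) = s * a + b := by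
    simp only [smul_eq_mul]; field_simp
  rw [heq] at hconv
  have hsa : (s * a) ^ 4 ≤ (1 - ε) ^ 4 * a ^ 4 := by
    have h4 : s ^ 4 ≤ (1 - ε) ^ 4 := by
      calc s ^ 4 = |s| ^ 4 := by rw [← abs_pow, abs_of_nonneg (by positivity)]
      _ ≤ (1 - ε) ^ 4 := pow_le_pow_left₀ (abs_nonneg s) hs 4
    have ha : (0:ℝ) ≤ a ^ 4 := by positivity
    calc (s * a) ^ 4 = s ^ 4 * a ^ 4 := by ring
    _ ≤ (1 - ε) ^ 4 * a ^ 4 := by nlinarith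
  calc (s * a + b) ^ 4 ≤ (1 - ε) • (s * a / (1 - ε)) ^ 4 + ε • (b / ε) ^ 4 := hconv
    _ = (s * a) ^ 4 / (1 - ε) ^ 3 + b ^ 4 / ε ^ 3 := by
        simp only [smul_eq_mul]; field_simp
    _ ≤ (1 - ε) * a ^ 4 + ε⁻¹ ^ 3 * b ^ 4 := by
        have h1 : (s * a) ^ 4 / (1 - ε) ^ 3 ≤ (1 - ε) * a ^ 4 := by
          rw [div_le_iff₀ (by positivity)]
          calc (s * a) ^ 4 ≤ (1 - ε) ^ 4 * a ^ 4 := hsa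
          _ = (1 - ε) * a ^ 4 * (1 - ε) ^ 3 := by ring
        have h2 : b ^ 4 / ε ^ 3 = ε⁻¹ ^ 3 * b ^ 4 := by
          field_simp
        linarith

lemma strong_bound (n : ℕ) (ε : ℝ) (hε0 : 0 < ε) (hε1 : ε < 1)
    (s ξ : ℕ → ℝ) (hs : ∀ k : ℕ, 1 ≤ k → k ≤ n → |s k| ≤ 1 - ε)
    (y : ℕ → ℝ) (hy : ∀ k < n, y (k + 1) = s (k + 1) * y k + ξ (k + 1)) :
    ∀ k : ℕ, k ≤ n →
      y k ^ 4 ≤ (1 - ε) ^ k * y 0 ^ 4 +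
        ε⁻¹ ^ 3 * ∑ j ∈ Finset.Icc 1 k, (1 - ε) ^ (k - j) * ξ j ^ 4 := by
  intro k
  induction k with
  | zero => intro _; simp
  | succ k ih =>
    intro hkn
    have hk : k < n := hkn
    have ihk := ih (le_of_lt hk)
    rw [hy k hk]
    have hkey := key_step ε (s (k+1)) (y k) (ξ (k+1)) hε0 hε1 (hs (k+1) (Nat.le_add_left 1 k) hkn)
    have h1ε : (0:ℝ) ≤ 1 - ε := by linarith
    have hsum : ∑ j ∈ Finset.Icc 1 (k+1), (1 - ε) ^ (k + 1 - j) * ξ j ^ 4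
        = (1 - ε) * ∑ j ∈ Finset.Icc 1 k, (1 - ε) ^ (k - j) * ξ j ^ 4 + ξ (k+1) ^ 4 := by
      rw [Finset.sum_Icc_succ_top (Nat.le_add_left 1 k), Finset.mul_sum]
      simp only [Nat.sub_self, pow_zero, one_mul]
      congr 1
      apply Finset.sum_congr rfl
      intro j hj
      have hjk : j ≤ k := (Finset.mem_Icc.mp hj).2
      rw [show k + 1 - j = (k - j) + 1 by omega]
      ring
    rw [hsum]
    have hεinv : (0:ℝ) ≤ ε⁻¹ ^ 3 := by positivity
    calc (s (k+1) * y k + ξ (k+1)) ^ 4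
        ≤ (1 - ε) * y k ^ 4 + ε⁻¹ ^ 3 * ξ (k+1) ^ 4 := hkey
      _ ≤ (1 - ε) * ((1 - ε) ^ k * y 0 ^ 4 +
            ε⁻¹ ^ 3 * ∑ j ∈ Finset.Icc 1 k, (1 - ε) ^ (k - j) * ξ j ^ 4)
          + ε⁻¹ ^ 3 * ξ (k+1) ^ 4 := by nlinarith [mul_le_mul_of_nonneg_left ihk h1ε]
      _ = (1 - ε) ^ (k+1) * y 0 ^ 4 + ε⁻¹ ^ 3 *
            ((1 - ε) * ∑ j ∈ Finset.Icc 1 k, (1 - ε) ^ (k - j) * ξ j ^ 4 + ξ (k+1) ^ 4) := by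
          ring

/-- A deterministic fourth-power bound for linear recursions with contraction
coefficients: `y_k⁴ ≤ 8 y_0⁴ + (8/ε³) Σ_{j=1}^k (1-ε)^{k-j} ξ_j⁴`. -/
theorem statement8 (n : ℕ) (ε : ℝ) (hε0 : 0 < ε) (hε1 : ε < 1)
    (s ξ : ℕ → ℝ) (hs : ∀ k : ℕ, 1 ≤ k → k ≤ n → |s k| ≤ 1 - ε)
    (y : ℕ → ℝ) (hy : ∀ k < n, y (k + 1) = s (k + 1) * y k + ξ (k + 1)) :
    ∀ k : ℕ, 1 ≤ k → k ≤ n →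
      y k ^ 4 ≤ 8 * y 0 ^ 4 +
        8 / ε ^ 3 * ∑ j ∈ Finset.Icc 1 k, (1 - ε) ^ (k - j) * ξ j ^ 4 := by
  intro k _ hkn
  have h := strong_bound n ε hε0 hε1 s ξ hs y hy k hkn
  have h1ε : (0:ℝ) ≤ 1 - ε := by linarith
  have hpow : (1 - ε) ^ k ≤ 1 := pow_le_one₀ h1ε (by linarith)
  have hy0 : (0:ℝ) ≤ y 0 ^ 4 := by positivity
  have hS : (0:ℝ) ≤ ∑ j ∈ Finset.Icc 1 k, (1 - ε) ^ (k - j) * ξ j ^ 4 := by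
    apply Finset.sum_nonneg
    intro j _
    positivity
  have h1 : (1 - ε) ^ k * y 0 ^ 4 ≤ 8 * y 0 ^ 4 := by nlinarith
  have h2 : ε⁻¹ ^ 3 ≤ 8 / ε ^ 3 := by
    rw [inv_pow, div_eq_mul_inv]
    nlinarith [inv_pos.mpr (pow_pos hε0 3)]
  nlinarith [mul_le_mul_of_nonneg_right h2 hS]


end
end
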